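/- Let n ≥ 4 and let (λ', λ'') be a bipartition of n with λ' ≠ λ''. Then there is no partition μ with |μ| = n/2 such that ff_n(λ', λ'') + ff_n(λ'', λ') = ff_n(μ, μ) in the free abelian group on bipartitions of n−1. -/

import Mathlib

open scoped Classical

noncomputable section

/-- `lam : ℕ → ℕ` is a partition of `n`: a weakly decreasing sequence of
nonnegative integers, eventually zero, with sum `n`. -/
def IsPartitionFun (n : ℕ) (lam : ℕ → ℕ) : Prop :=
  Antitone lam ∧ (Function.support lam).Finite ∧ ∑ᶠ i, lam i = n

/-- `f_n(λ) = Σ_{i : λ_i > λ_{i+1}} [λ with λ_i decreased by 1]`, an element of the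
free abelian group on sequences (for partitions `λ` of `n`, all terms are
partitions of `n−1`, so equality of such elements is equality in the free
abelian group `(P_{n-1})` on partitions of `n−1`). -/
def partDec (lam : ℕ → ℕ) : FreeAbelianGroup (ℕ → ℕ) :=
  ∑ᶠ i ∈ {i : ℕ | lam (i + 1) < lam i},
    FreeAbelianGroup.of (Function.update lam i (lam i - 1))

/-- `p = (λ', λ'')` is a bipartition of `n`: `λ'`, `λ''` are partitions with
`|λ'| + |λ''| = n`. -/
def IsBipartitionFun (n : ℕ) (p : (ℕ → ℕ) × (ℕ → ℕ)) : Prop :=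
  ∃ a b : ℕ, IsPartitionFun a p.1 ∧ IsPartitionFun b p.2 ∧ a + b = n

/-- `ff_n(λ', λ'') = f(λ') ⊗ λ'' + λ' ⊗ f(λ'')`, an element of the free abelian
group on pairs of sequences (for bipartitions of `n`, all terms are bipartitions
of `n−1`, so equalities below are equalities in the free abelian group
`(BP_{n-1})` on bipartitions of `n−1`). -/
def bipartDec (p : (ℕ → ℕ) × (ℕ → ℕ)) : FreeAbelianGroup ((ℕ → ℕ) × (ℕ → ℕ)) :=
  (∑ᶠ i ∈ {i : ℕ | p.1 (i + 1) < p.1 i},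
    FreeAbelianGroup.of (Function.update p.1 i (p.1 i - 1), p.2)) +
  (∑ᶠ i ∈ {i : ℕ | p.2 (i + 1) < p.2 i},
    FreeAbelianGroup.of (p.1, Function.update p.2 i (p.2 i - 1)))

namespace S5Aux

variable {α : Type*}

def coeffHom (x : α) : FreeAbelianGroup α →+ ℤ :=
  FreeAbelianGroup.lift (fun y => if y = x then (1:ℤ) else 0)

lemma coeffHom_of (x y : α) : coeffHom x (FreeAbelianGroup.of y) = if y = x then 1 else 0 :=
  FreeAbelianGroup.lift_apply_of _ _

lemma coeff_finsum (x : α) {S : Set ℕ} (hS : S.Finite) (g : ℕ → α) :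
    coeffHom x (∑ᶠ i ∈ S, FreeAbelianGroup.of (g i)) =
      ∑ i ∈ hS.toFinset, if g i = x then (1:ℤ) else 0 := by
  rw [finsum_mem_eq_finite_toFinset_sum _ hS, map_sum]
  simp [coeffHom_of]

lemma coeff_nonneg (x : α) {S : Set ℕ} (hS : S.Finite) (g : ℕ → α) :
    0 ≤ coeffHom x (∑ᶠ i ∈ S, FreeAbelianGroup.of (g i)) := by
  rw [coeff_finsum x hS g]
  exact Finset.sum_nonneg fun i _ => by split <;> norm_num

lemma coeff_one_le (x : α) {S : Set ℕ} (hS : S.Finite) (g : ℕ → α) {i0 : ℕ}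
    (hi : i0 ∈ S) (hg : g i0 = x) :
    1 ≤ coeffHom x (∑ᶠ i ∈ S, FreeAbelianGroup.of (g i)) := by
  rw [coeff_finsum x hS g]
  have h := Finset.single_le_sum (f := fun i => if g i = x then (1:ℤ) else 0)
    (fun i _ => by by_cases h : g i = x <;> simp [h]) (hS.mem_toFinset.2 hi)
  simpa [hg] using h

lemma coeff_zero (x : α) {S : Set ℕ} (hS : S.Finite) (g : ℕ → α)
    (h : ∀ i ∈ S, g i ≠ x) :
    coeffHom x (∑ᶠ i ∈ S, FreeAbelianGroup.of (g i)) = 0 := by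
  rw [coeff_finsum x hS g]
  exact Finset.sum_eq_zero fun i hi => by simp [h i (hS.mem_toFinset.1 hi)]

lemma corner_finite {f : ℕ → ℕ} (hf : (Function.support f).Finite) :
    {i : ℕ | f (i+1) < f i}.Finite := by
  apply hf.subset
  intro i hi
  simp only [Set.mem_setOf_eq] at hi
  simp only [Function.mem_support]
  omega

lemma corner_exists {f : ℕ → ℕ} (hf : (Function.support f).Finite) {a : ℕ}
    (hsum : ∑ᶠ i, f i = a) (ha : 0 < a) :
    ∃ i, f (i+1) < f i := by
  have hne : hf.toFinset.Nonempty := by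
    by_contra h
    rw [Finset.not_nonempty_iff_eq_empty] at h
    have hz : f = 0 := by
      funext i; by_contra hfi
      have : i ∈ hf.toFinset := hf.mem_toFinset.2 hfi
      simp [h] at this
    rw [hz] at hsum
    simp at hsum
    omega
  set i0 := hf.toFinset.max' hne with hi0
  have h1 : f i0 ≠ 0 := hf.mem_toFinset.1 (hf.toFinset.max'_mem hne)
  have h2 : f (i0+1) = 0 := by
    by_contra h
    have := hf.toFinset.le_max' (i0+1) (hf.mem_toFinset.2 h)
    omega
  exact ⟨i0, by omega⟩

lemma finsum_update (f : ℕ → ℕ) (hf : (Function.support f).Finite) (i : ℕ) (v : ℕ) :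
    (∑ᶠ j, Function.update f i v j) + f i = (∑ᶠ j, f j) + v := by
  classical
  set s := hf.toFinset ∪ {i} with hs
  have hi : i ∈ s := by simp [hs]
  have hsub : Function.support f ⊆ ↑s := by
    intro j hj; simp only [hs, Finset.coe_union, Set.mem_union, Finset.coe_singleton]
    exact Or.inl (by simpa using hf.mem_toFinset.2 hj)
  have hsub2 : Function.support (Function.update f i v) ⊆ ↑s := by
    intro j hj
    by_cases hji : j = i
    · simp [hs, hji]
    · have hfj : f j ≠ 0 := by simpa [Function.update_of_ne hji] using hj
      simp only [hs, Finset.coe_union, Set.mem_union, Finset.coe_singleton]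
      exact Or.inl (by simpa using hf.mem_toFinset.2 hfj)
  rw [finsum_eq_sum_of_support_subset _ hsub2, finsum_eq_sum_of_support_subset _ hsub]
  rw [Finset.sum_update_of_mem hi, ← Finset.add_sum_erase s f hi, Finset.erase_eq]
  ring



lemma ne_of_sum_ne {f g : ℕ → ℕ} {a k : ℕ} (hf : ∑ᶠ i, f i = a) (hg : ∑ᶠ i, g i = k)
    (h : a ≠ k) : f ≠ g := fun he => h (by rw [← hf, ← hg, he])

lemma key {k a b : ℕ} {mu l1 l2 : ℕ → ℕ}
    (hmu : IsPartitionFun k mu) (h1 : IsPartitionFun a l1) (h2 : IsPartitionFun b l2)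
    (ha : 0 < a) (ha' : a ≠ k + 1) (hl2 : l2 ≠ mu) :
    bipartDec (l1, l2) + bipartDec (l2, l1) ≠ bipartDec (mu, mu) := by
  obtain ⟨-, hfin1, hsum1⟩ := h1
  obtain ⟨-, hfin2, hsum2⟩ := h2
  obtain ⟨-, hfinmu, hsummu⟩ := hmu
  obtain ⟨i0, hi0⟩ := corner_exists hfin1 hsum1 ha
  set w := Function.update l1 i0 (l1 i0 - 1) with hw
  have hwsum : ∑ᶠ j, w j = a - 1 := by
    have h := finsum_update l1 hfin1 i0 (l1 i0 - 1)
    rw [hsum1, ← hw] at h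
    omega
  have hwmu : w ≠ mu := by
    intro h
    have : a - 1 = k := by rw [← hwsum, h, hsummu]
    omega
  intro heq
  have hco := congrArg (coeffHom (w, l2)) heq
  rw [map_add] at hco
  unfold bipartDec at hco
  simp only [map_add] at hco
  have c1 : 1 ≤ coeffHom (w, l2) (∑ᶠ i ∈ {i : ℕ | l1 (i + 1) < l1 i},
      FreeAbelianGroup.of (Function.update l1 i (l1 i - 1), l2)) :=
    coeff_one_le _ (corner_finite hfin1) _ hi0 rfl
  have c2 : 0 ≤ coeffHom (w, l2) (∑ᶠ i ∈ {i : ℕ | l2 (i + 1) < l2 i},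
      FreeAbelianGroup.of (l1, Function.update l2 i (l2 i - 1))) :=
    coeff_nonneg _ (corner_finite hfin2) _
  have c3 : 0 ≤ coeffHom (w, l2) (∑ᶠ i ∈ {i : ℕ | l2 (i + 1) < l2 i},
      FreeAbelianGroup.of (Function.update l2 i (l2 i - 1), l1)) :=
    coeff_nonneg _ (corner_finite hfin2) _
  have c4 : 0 ≤ coeffHom (w, l2) (∑ᶠ i ∈ {i : ℕ | l1 (i + 1) < l1 i},
      FreeAbelianGroup.of (l2, Function.update l1 i (l1 i - 1))) :=
    coeff_nonneg _ (corner_finite hfin1) _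
  have r1 : coeffHom (w, l2) (∑ᶠ i ∈ {i : ℕ | mu (i + 1) < mu i},
      FreeAbelianGroup.of (Function.update mu i (mu i - 1), mu)) = 0 :=
    coeff_zero _ (corner_finite hfinmu) _
      (fun i _ h => hl2 ((congrArg Prod.snd h)).symm)
  have r2 : coeffHom (w, l2) (∑ᶠ i ∈ {i : ℕ | mu (i + 1) < mu i},
      FreeAbelianGroup.of (mu, Function.update mu i (mu i - 1))) = 0 :=
    coeff_zero _ (corner_finite hfinmu) _
      (fun i _ h => hwmu ((congrArg Prod.fst h)).symm)
  linarith [hco, c1, c2, c3, c4, r1, r2]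

end S5Aux

/-- for `n ≥ 4` and a bipartition `(λ',λ'')` of `n` with `λ' ≠ λ''`,
there is no partition `μ` with `|μ| = n/2` such that
`ff_n(λ',λ'') + ff_n(λ'',λ') = ff_n(μ,μ)`. -/
theorem statement5 (n : ℕ) (hn : 4 ≤ n) (p : (ℕ → ℕ) × (ℕ → ℕ))
    (hp : IsBipartitionFun n p) (hp' : p.1 ≠ p.2) :
    ∀ (mu : ℕ → ℕ) (k : ℕ), IsPartitionFun k mu → 2 * k = n →
      bipartDec p + bipartDec p.swap ≠ bipartDec (mu, mu) := by
  obtain ⟨l1, l2⟩ := p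
  obtain ⟨a, b, h1, h2, hab⟩ := hp
  simp only at hp' h1 h2
  intro mu k hmu hk heq
  have hswap : (Prod.swap (l1, l2)) = (l2, l1) := rfl
  rw [hswap] at heq
  have hsum1 : ∑ᶠ i, l1 i = a := h1.2.2
  have hsum2 : ∑ᶠ i, l2 i = b := h2.2.2
  have hsummu : ∑ᶠ i, mu i = k := hmu.2.2
  have hk2 : 2 ≤ k := by omega
  have habk : a + b = 2 * k := by omega
  rcases eq_or_ne a (k+1) with hA | hA
  · exact S5Aux.key hmu h2 h1 (by omega) (by omega)
      (S5Aux.ne_of_sum_ne hsum1 hsummu (by omega)) ((add_comm _ _).trans heq)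
  rcases eq_or_ne b (k+1) with hB | hB
  · exact S5Aux.key hmu h1 h2 (by omega) (by omega)
      (S5Aux.ne_of_sum_ne hsum2 hsummu (by omega)) heq
  rcases eq_or_ne a k with hK | hK
  · rcases eq_or_ne l2 mu with hM | hM
    · have hM1 : l1 ≠ mu := fun h => hp' (h.trans hM.symm)
      exact S5Aux.key hmu h2 h1 (by omega) hB hM1 ((add_comm _ _).trans heq)
    · exact S5Aux.key hmu h1 h2 (by omega) hA hM heq
  rcases lt_or_gt_of_ne hK with hlt | hgt
  · -- a < k, so b ≥ k+2 (b ≠ k+1), use swapped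
    exact S5Aux.key hmu h2 h1 (by omega) hB
      (S5Aux.ne_of_sum_ne hsum1 hsummu (by omega)) ((add_comm _ _).trans heq)
  · -- a > k, a ≠ k+1 so a ≥ k+2, b ≤ k-2
    exact S5Aux.key hmu h1 h2 (by omega) hA
      (S5Aux.ne_of_sum_ne hsum2 hsummu (by omega)) heq
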